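/- Let φ be an endomorphism of ℙ¹ of degree ≥ 2 defined over a field K with a discrete valuation v at which φ has good reduction, with residue field k(v). Let P ∈ ℙ¹(K) be periodic for φ with minimal period n, let m be the minimal period of the reduction of P modulo v for the reduced map φ_v, and let r be the multiplicative order of (φ^m)'(P) in k(v)*. Then n = m, or n = mr, or n = p^e·m·r for some e ≥ 1, where p is the characteristic of k(v). -/

import Mathlib

set_option synthInstance.maxHeartbeats 1000000

noncomputable section

/-- Evaluation at a point of the pair of binary forms
`F(X,Y) = ∑ aᵢ Xⁱ Y^(d−i)`, `G(X,Y) = ∑ bᵢ Xⁱ Y^(d−i)` of degree `d`,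
i.e. the map `φ([X:Y]) = [F(X,Y):G(X,Y)]` in homogeneous coordinates. -/
def evalPair {K : Type} [CommRing K] (d : ℕ) (a b : Fin (d+1) → K) (P : K × K) : K × K :=
  (∑ i : Fin (d+1), a i * P.1 ^ (i:ℕ) * P.2 ^ (d - (i:ℕ)),
   ∑ i : Fin (d+1), b i * P.1 ^ (i:ℕ) * P.2 ^ (d - (i:ℕ)))

/-- The Sylvester matrix of the two binary forms of degree `d` with coefficient
vectors `a`, `b`. -/
def sylvester {K : Type} [CommRing K] (d : ℕ) (a b : Fin (d+1) → K) :
    Matrix (Fin (d+d)) (Fin (d+d)) K :=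
  fun i j =>
    if _ : (i:ℕ) < d then
      if hj : (i:ℕ) ≤ (j:ℕ) ∧ (j:ℕ) ≤ (i:ℕ) + d then a ⟨(j:ℕ) - (i:ℕ), by omega⟩ else 0
    else
      if hj : (i:ℕ) - d ≤ (j:ℕ) ∧ (j:ℕ) ≤ (i:ℕ) then b ⟨(j:ℕ) - ((i:ℕ) - d), by omega⟩ else 0

/-- The (homogeneous) resultant `Res(F,G)` of the two binary forms of degree `d`,
as the determinant of their Sylvester matrix. -/
def resultant {K : Type} [CommRing K] (d : ℕ) (a b : Fin (d+1) → K) : K :=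
  (sylvester d a b).det

/-- The Jacobian matrix of the homogeneous map `(F,G)` at the point `P`. -/
def jacMat {k : Type} [CommRing k] (d : ℕ) (a b : Fin (d+1) → k) (P : k × k) :
    Matrix (Fin 2) (Fin 2) k :=
  Matrix.of
    ![![∑ i : Fin (d+1), a i * (i : ℕ) * P.1 ^ ((i:ℕ) - 1) * P.2 ^ (d - (i:ℕ)),
        ∑ i : Fin (d+1), a i * ((d - (i:ℕ) : ℕ)) * P.1 ^ (i:ℕ) * P.2 ^ (d - (i:ℕ) - 1)],
      ![∑ i : Fin (d+1), b i * (i : ℕ) * P.1 ^ ((i:ℕ) - 1) * P.2 ^ (d - (i:ℕ)),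
        ∑ i : Fin (d+1), b i * ((d - (i:ℕ) : ℕ)) * P.1 ^ (i:ℕ) * P.2 ^ (d - (i:ℕ) - 1)]]

/-- The chain-rule product of Jacobian matrices of `(F,G)` along the forward orbit of
`P` : `jacProd m` is the Jacobian matrix of the `m`-th iterate of `(F,G)` at `P`. -/
def jacProd {k : Type} [CommRing k] (d : ℕ) (a b : Fin (d+1) → k) (P : k × k) :
    ℕ → Matrix (Fin 2) (Fin 2) k
  | 0 => 1
  | (j+1) => jacMat d a b ((evalPair d a b)^[j] P) * jacProd d a b P j

namespace MSZ

variable {S T : Type} [CommRing S] [CommRing T]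

/-- apply a ring hom to both coordinates -/
def pmap (σ : S →+* T) (A : S × S) : T × T := (σ A.1, σ A.2)

lemma pmap_evalPair (σ : S →+* T) (d : ℕ) (a b : Fin (d+1) → S) (A : S × S) :
    evalPair d (fun i => σ (a i)) (fun i => σ (b i)) (pmap σ A) = pmap σ (evalPair d a b A) := by
  simp [evalPair, pmap, map_sum, map_mul, map_pow]

lemma pmap_evalPair_iterate (σ : S →+* T) (d : ℕ) (a b : Fin (d+1) → S) (A : S × S) (j : ℕ) :
    (evalPair d (fun i => σ (a i)) (fun i => σ (b i)))^[j] (pmap σ A)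
      = pmap σ ((evalPair d a b)^[j] A) := by
  induction j with
  | zero => rfl
  | succ j ih => rw [Function.iterate_succ_apply', Function.iterate_succ_apply', ih,
      pmap_evalPair]

lemma smul_pair (c : S) (A : S × S) : c • A = (c * A.1, c * A.2) := rfl

lemma hom_term (d i : ℕ) (hi : i ≤ d) (q x y c : S) :
    q * (c * x) ^ i * (c * y) ^ (d - i) = c ^ d * (q * x ^ i * y ^ (d - i)) := by
  have h : c ^ i * c ^ (d - i) = c ^ d := by rw [← pow_add]; congr 1; omega
  rw [mul_pow, mul_pow]
  linear_combination (q * x ^ i * y ^ (d - i)) * h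

lemma evalPair_smul (d : ℕ) (a b : Fin (d+1) → S) (c : S) (A : S × S) :
    evalPair d a b (c • A) = c ^ d • evalPair d a b A := by
  simp only [evalPair, smul_pair]
  refine Prod.ext ?_ ?_ <;>
  · simp only [Finset.mul_sum]
    refine Finset.sum_congr rfl fun i _ => ?_
    exact hom_term d i (Nat.lt_succ_iff.mp i.isLt) _ _ _ _

lemma evalPair_iterate_smul (d : ℕ) (a b : Fin (d+1) → S) (c : S) (A : S × S) (j : ℕ) :
    (evalPair d a b)^[j] (c • A) = c ^ (d ^ j) • (evalPair d a b)^[j] A := by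
  induction j with
  | zero => simp
  | succ j ih => rw [Function.iterate_succ_apply', Function.iterate_succ_apply', ih,
      evalPair_smul, ← pow_mul, ← pow_succ]

/-- 2x2 determinant of two column vectors given as pairs -/
def det2 (A B : S × S) : S := A.1 * B.2 - A.2 * B.1

/-- action of a 2x2 matrix on a pair -/
def act (M : Matrix (Fin 2) (Fin 2) S) (A : S × S) : S × S :=
  (M 0 0 * A.1 + M 0 1 * A.2, M 1 0 * A.1 + M 1 1 * A.2)

lemma act_mul (M N : Matrix (Fin 2) (Fin 2) S) (A : S × S) :
    act (M * N) A = act M (act N A) := by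
  simp only [act, Matrix.mul_apply, Fin.sum_univ_two]
  exact Prod.ext (by ring) (by ring)

lemma act_smul (M : Matrix (Fin 2) (Fin 2) S) (c : S) (A : S × S) :
    act M (c • A) = c • act M A := by
  simp only [act, smul_pair]
  exact Prod.ext (by ring) (by ring)

lemma act_one (A : S × S) : act 1 A = A := by
  simp [act, Matrix.one_apply]

lemma det2_smul_left (c : S) (A B : S × S) : det2 (c • A) B = c * det2 A B := by
  simp only [det2, smul_pair]; ring

lemma det2_smul_right (c : S) (A B : S × S) : det2 A (c • B) = c * det2 A B := by
  simp only [det2, smul_pair]; ring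

lemma det2_smul_self (c : S) (A : S × S) : det2 A (c • A) = 0 := by
  simp only [det2, smul_pair]; ring

lemma det2_smul_self' (c : S) (A : S × S) : det2 (c • A) A = 0 := by
  simp only [det2, smul_pair]; ring

lemma polarization (M : Matrix (Fin 2) (Fin 2) S) (A B : S × S) :
    det2 (act M A) B + det2 A (act M B) = M.trace * det2 A B := by
  simp only [det2, act, Matrix.trace_fin_two]; ring

lemma key_lin1 (M : Matrix (Fin 2) (Fin 2) S) (W A X : S × S) :
    A.1 * det2 W (act M X)
      = X.1 * det2 W (act M A) + det2 A X * det2 W (act M (0, 1)) := by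
  simp only [det2, act]; ring

lemma key_lin2 (M : Matrix (Fin 2) (Fin 2) S) (W A X : S × S) :
    A.2 * det2 W (act M X)
      = X.2 * det2 W (act M A) - det2 A X * det2 W (act M (1, 0)) := by
  simp only [det2, act]; ring

lemma jacMat00 (d : ℕ) (a b : Fin (d+1) → S) (P : S × S) :
    jacMat d a b P 0 0 = ∑ i : Fin (d+1), a i * (i : ℕ) * P.1 ^ ((i:ℕ) - 1) * P.2 ^ (d - (i:ℕ)) := rfl
lemma jacMat01 (d : ℕ) (a b : Fin (d+1) → S) (P : S × S) :
    jacMat d a b P 0 1 = ∑ i : Fin (d+1), a i * ((d - (i:ℕ) : ℕ)) * P.1 ^ (i:ℕ) * P.2 ^ (d - (i:ℕ) - 1) := rfl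
lemma jacMat10 (d : ℕ) (a b : Fin (d+1) → S) (P : S × S) :
    jacMat d a b P 1 0 = ∑ i : Fin (d+1), b i * (i : ℕ) * P.1 ^ ((i:ℕ) - 1) * P.2 ^ (d - (i:ℕ)) := rfl
lemma jacMat11 (d : ℕ) (a b : Fin (d+1) → S) (P : S × S) :
    jacMat d a b P 1 1 = ∑ i : Fin (d+1), b i * ((d - (i:ℕ) : ℕ)) * P.1 ^ (i:ℕ) * P.2 ^ (d - (i:ℕ) - 1) := rfl

lemma euler_term (d i : ℕ) (hi : i ≤ d) (hd : 1 ≤ d) (q x y : S) :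
    q * (i : S) * x ^ (i - 1) * y ^ (d - i) * x + q * ((d - i : ℕ) : S) * x ^ i * y ^ (d - i - 1) * y
      = ((d : ℕ) : S) * (q * x ^ i * y ^ (d - i)) := by
  rcases Nat.eq_zero_or_pos i with h0 | hpos
  · subst h0
    have h1 : y ^ (d - 0 - 1) * y = y ^ (d - 0) := by
      rw [← pow_succ]; congr 1; omega
    have h3 : ((d - 0 : ℕ) : S) = (d : S) := by norm_num
    linear_combination (q * ((d:ℕ):S)) * h1 + (q * y ^ (d - 0 - 1) * y) * h3
  · have h1 : x ^ (i - 1) * x = x ^ i := by rw [← pow_succ]; congr 1; omega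
    rcases eq_or_lt_of_le hi with hieq | hilt
    · subst hieq
      have h4 : ((i - i : ℕ) : S) = 0 := by simp
      linear_combination (q * (i:S) * y ^ (i - i)) * h1 + (q * x ^ i * y ^ (i - i - 1) * y) * h4
    · have h2 : y ^ (d - i - 1) * y = y ^ (d - i) := by rw [← pow_succ]; congr 1; omega
      have h3 : ((d - i : ℕ) : S) = (d : S) - (i : S) := by
        push_cast [Nat.cast_sub hi]; ring
      linear_combination (q * (i:S) * y ^ (d - i)) * h1 + (q * ((d - i : ℕ) : S) * x ^ i) * h2
        + (q * x ^ i * y ^ (d - i)) * h3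

lemma euler (d : ℕ) (hd : 1 ≤ d) (a b : Fin (d+1) → S) (A : S × S) :
    act (jacMat d a b A) A = ((d : ℕ) : S) • evalPair d a b A := by
  simp only [act, jacMat00, jacMat01, jacMat10, jacMat11, evalPair, smul_pair]
  refine Prod.ext ?_ ?_ <;>
  · simp only [Finset.sum_mul, Finset.mul_sum, ← Finset.sum_add_distrib]
    refine Finset.sum_congr rfl fun i _ => ?_
    exact euler_term d i (Nat.lt_succ_iff.mp i.isLt) hd _ _ _

lemma jac_term1 (d i : ℕ) (hi : i ≤ d) (q x y c : S) :
    q * (i : S) * (c * x) ^ (i - 1) * (c * y) ^ (d - i)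
      = c ^ (d - 1) * (q * (i : S) * x ^ (i - 1) * y ^ (d - i)) := by
  rcases Nat.eq_zero_or_pos i with h0 | hpos
  · subst h0; simp
  · have h : c ^ (i - 1) * c ^ (d - i) = c ^ (d - 1) := by rw [← pow_add]; congr 1; omega
    rw [mul_pow, mul_pow]
    linear_combination (q * (i:S) * x ^ (i-1) * y ^ (d-i)) * h

lemma jac_term2 (d i : ℕ) (hi : i ≤ d) (q x y c : S) :
    q * ((d - i : ℕ) : S) * (c * x) ^ i * (c * y) ^ (d - i - 1)
      = c ^ (d - 1) * (q * ((d - i : ℕ) : S) * x ^ i * y ^ (d - i - 1)) := by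
  rcases eq_or_lt_of_le hi with hieq | hilt
  · subst hieq; simp
  · have h : c ^ i * c ^ (d - i - 1) = c ^ (d - 1) := by rw [← pow_add]; congr 1; omega
    rw [mul_pow, mul_pow]
    linear_combination (q * ((d-i:ℕ):S) * x ^ i * y ^ (d-i-1)) * h

lemma jacMat_smul00 (d : ℕ) (a b : Fin (d+1) → S) (c : S) (A : S × S) :
    jacMat d a b (c • A) 0 0 = c ^ (d - 1) * jacMat d a b A 0 0 := by
  simp only [jacMat00, smul_pair, Finset.mul_sum]
  exact Finset.sum_congr rfl fun i _ => jac_term1 d i (Nat.lt_succ_iff.mp i.isLt) _ _ _ _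
lemma jacMat_smul10 (d : ℕ) (a b : Fin (d+1) → S) (c : S) (A : S × S) :
    jacMat d a b (c • A) 1 0 = c ^ (d - 1) * jacMat d a b A 1 0 := by
  simp only [jacMat10, smul_pair, Finset.mul_sum]
  exact Finset.sum_congr rfl fun i _ => jac_term1 d i (Nat.lt_succ_iff.mp i.isLt) _ _ _ _
lemma jacMat_smul01 (d : ℕ) (a b : Fin (d+1) → S) (c : S) (A : S × S) :
    jacMat d a b (c • A) 0 1 = c ^ (d - 1) * jacMat d a b A 0 1 := by
  simp only [jacMat01, smul_pair, Finset.mul_sum]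
  exact Finset.sum_congr rfl fun i _ => jac_term2 d i (Nat.lt_succ_iff.mp i.isLt) _ _ _ _
lemma jacMat_smul11 (d : ℕ) (a b : Fin (d+1) → S) (c : S) (A : S × S) :
    jacMat d a b (c • A) 1 1 = c ^ (d - 1) * jacMat d a b A 1 1 := by
  simp only [jacMat11, smul_pair, Finset.mul_sum]
  exact Finset.sum_congr rfl fun i _ => jac_term2 d i (Nat.lt_succ_iff.mp i.isLt) _ _ _ _

section Shift

variable {S : Type} [CommRing S]

/-- divided-difference cofactor for powers -/
def hgeom (e : ℕ) (y t : S) : S := ∑ l ∈ Finset.range e, (y + t) ^ l * y ^ (e - 1 - l)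

lemma hgeom_spec (e : ℕ) (y t : S) : (y + t) ^ e = y ^ e + t * hgeom e y t := by
  have h := geom_sum₂_mul (y + t) y e
  rw [add_sub_cancel_left] at h
  unfold hgeom
  linear_combination -h

lemma hgeom_zero {k : Type} [CommRing k] (e : ℕ) (y : k) :
    hgeom e y 0 = (e : k) * y ^ (e - 1) := by
  unfold hgeom
  rw [add_zero]
  have : ∀ l ∈ Finset.range e, y ^ l * y ^ (e - 1 - l) = y ^ (e - 1) := by
    intro l hl
    rw [← pow_add]
    congr 1
    have := Finset.mem_range.mp hl
    omega
  rw [Finset.sum_congr rfl this, Finset.sum_const, Finset.card_range, nsmul_eq_mul]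

lemma pmap_smul {T : Type} [CommRing T] (σ : S →+* T) (c : S) (A : S × S) :
    pmap σ (c • A) = σ c • pmap σ A := by
  simp [pmap, smul_pair]

lemma pmap_hgeom {T : Type} [CommRing T] (σ : S →+* T) (e : ℕ) (y t : S) :
    σ (hgeom e y t) = hgeom e (σ y) (σ t) := by
  simp [hgeom, map_sum, map_mul, map_pow, map_add]

lemma shift2 (d : ℕ) (a : Fin (d+1) → S) (x y t : S) :
    (∑ i : Fin (d+1), a i * x ^ (i:ℕ) * (y + t) ^ (d - (i:ℕ)))
      = (∑ i : Fin (d+1), a i * x ^ (i:ℕ) * y ^ (d - (i:ℕ)))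
        + t * (∑ i : Fin (d+1), a i * x ^ (i:ℕ) * hgeom (d - (i:ℕ)) y t) := by
  rw [Finset.mul_sum, ← Finset.sum_add_distrib]
  refine Finset.sum_congr rfl fun i _ => ?_
  linear_combination (a i * x ^ (i:ℕ)) * hgeom_spec (d - (i:ℕ)) y t

lemma shift1 (d : ℕ) (a : Fin (d+1) → S) (x y t : S) :
    (∑ i : Fin (d+1), a i * (x + t) ^ (i:ℕ) * y ^ (d - (i:ℕ)))
      = (∑ i : Fin (d+1), a i * x ^ (i:ℕ) * y ^ (d - (i:ℕ)))
        + t * (∑ i : Fin (d+1), a i * hgeom (i:ℕ) x t * y ^ (d - (i:ℕ))) := by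
  rw [Finset.mul_sum, ← Finset.sum_add_distrib]
  refine Finset.sum_congr rfl fun i _ => ?_
  linear_combination (a i * y ^ (d - (i:ℕ))) * hgeom_spec (i:ℕ) x t

end Shift

section FieldPart

variable {k : Type} [Field k]

open Classical in
/-- the multiplier cocycle: `det2 (f v, jac v • x) = rho v * det2 (v, x)` -/
def rho (d : ℕ) (a b : Fin (d+1) → k) (v : k × k) : k :=
  if v.1 ≠ 0 then det2 (evalPair d a b v) (act (jacMat d a b v) (0, 1)) / v.1
  else - det2 (evalPair d a b v) (act (jacMat d a b v) (1, 0)) / v.2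

lemma rho_prop (d : ℕ) (hd : 1 ≤ d) (a b : Fin (d+1) → k) (v : k × k) (hv : v ≠ 0)
    (x : k × k) :
    det2 (evalPair d a b v) (act (jacMat d a b v) x)
      = rho d a b v * det2 v x := by
  have heuler : det2 (evalPair d a b v) (act (jacMat d a b v) v) = 0 := by
    rw [euler d hd a b v, det2_smul_self]
  by_cases h1 : v.1 ≠ 0
  · rw [rho, if_pos h1]
    have := key_lin1 (jacMat d a b v) (evalPair d a b v) v x
    rw [heuler, mul_zero, zero_add] at this
    rw [div_mul_eq_mul_div, eq_div_iff h1]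
    linear_combination this
  · have h2 : v.2 ≠ 0 := by
      intro h2; apply hv; push_neg at h1
      exact Prod.ext h1 h2
    rw [rho, if_neg h1]
    have := key_lin2 (jacMat d a b v) (evalPair d a b v) v x
    rw [heuler, mul_zero, zero_sub] at this
    rw [neg_div, neg_mul, div_mul_eq_mul_div, ← neg_div, eq_div_iff h2]
    linear_combination this

lemma jacProd_succ (d : ℕ) (a b : Fin (d+1) → k) (P : k × k) (j : ℕ) :
    jacProd d a b P (j+1) = jacMat d a b ((evalPair d a b)^[j] P) * jacProd d a b P j := rfl

lemma jacProd_det2 (d : ℕ) (hd : 1 ≤ d) (a b : Fin (d+1) → k) (v : k × k) (m : ℕ)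
    (hvi : ∀ i, i < m → (evalPair d a b)^[i] v ≠ 0) (x : k × k) :
    det2 ((evalPair d a b)^[m] v) (act (jacProd d a b v m) x)
      = (∏ i ∈ Finset.range m, rho d a b ((evalPair d a b)^[i] v)) * det2 v x := by
  induction m with
  | zero => simp [jacProd, act_one]
  | succ j ih =>
    rw [jacProd_succ, act_mul, Function.iterate_succ_apply',
      rho_prop d hd a b _ (hvi j (Nat.lt_succ_self j)),
      ih (fun i hi => hvi i (Nat.lt_succ_of_lt hi)), Finset.prod_range_succ]
    ring

lemma jacProd_euler (d : ℕ) (hd : 1 ≤ d) (a b : Fin (d+1) → k) (v : k × k) (m : ℕ) :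
    act (jacProd d a b v m) v = (((d : ℕ) : k)) ^ m • (evalPair d a b)^[m] v := by
  induction m with
  | zero => simp [jacProd, act_one]
  | succ j ih =>
    rw [jacProd_succ, act_mul, ih, act_smul, euler d hd a b, Function.iterate_succ_apply',
      smul_smul, pow_succ]

lemma lkey (d : ℕ) (hd : 1 ≤ d) (a b : Fin (d+1) → k) (v : k × k) (m : ℕ)
    (hv : v ≠ 0)
    (hvi : ∀ i, i < m → (evalPair d a b)^[i] v ≠ 0)
    (C : k) (hC : (evalPair d a b)^[m] v = C • v) :
    (∏ i ∈ Finset.range m, rho d a b ((evalPair d a b)^[i] v))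
      = C * ((jacProd d a b v m).trace - ((d : ℕ) : k) ^ m * C) := by
  have key : ∀ x, C * det2 v (act (jacProd d a b v m) x)
      = (∏ i ∈ Finset.range m, rho d a b ((evalPair d a b)^[i] v)) * det2 v x := by
    intro x
    have := jacProd_det2 d hd a b v m hvi x
    rw [hC, det2_smul_left] at this
    exact this
  have hpol := polarization (jacProd d a b v m) v
  have hact : act (jacProd d a b v m) v = (((d : ℕ) : k) ^ m * C) • v := by
    rw [jacProd_euler d hd a b v m, hC, smul_smul]
  obtain ⟨x, hx⟩ : ∃ x : k × k, det2 v x ≠ 0 := by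
    by_cases h1 : v.1 ≠ 0
    · exact ⟨(0, 1), by simpa [det2]⟩
    · push_neg at h1
      have h2 : v.2 ≠ 0 := fun h2 => hv (Prod.ext h1 h2)
      exact ⟨(1, 0), by simpa [det2]⟩
  have hx2 := hpol x
  rw [hact, det2_smul_left] at hx2
  have h5 : det2 v (act (jacProd d a b v m) x)
      = ((jacProd d a b v m).trace - ((d : ℕ) : k) ^ m * C) * det2 v x := by
    linear_combination hx2
  have h6 : (C * ((jacProd d a b v m).trace - ((d : ℕ) : k) ^ m * C)) * det2 v x
      = (∏ i ∈ Finset.range m, rho d a b ((evalPair d a b)^[i] v)) * det2 v x := by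
    rw [← key x, h5]; ring
  exact (mul_right_cancel₀ hx h6).symm

end FieldPart

section LocalPart

open IsLocalRing

variable {R : Type} [CommRing R] [IsLocalRing R]

lemma res_unit_inv (u : Rˣ) : residue R ↑u⁻¹ = (residue R ↑u)⁻¹ := by
  have h : residue R ↑u⁻¹ * residue R ↑u = 1 := by
    rw [← map_mul]; norm_num
  exact eq_inv_of_mul_eq_one_left h

lemma step_factor (d : ℕ) (hd : 1 ≤ d) (a b : Fin (d+1) → R) (A B : R × R)
    (v : ResidueField R × ResidueField R) (hv : v ≠ 0) (α β : ResidueField R)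
    (hα : α ≠ 0)
    (hA : pmap (residue R) A = α • v) (hB : pmap (residue R) B = β • v) :
    ∃ E : R, det2 (evalPair d a b A) (evalPair d a b B) = det2 A B * E ∧
      residue R E = α ^ (d-1) * β ^ (d-1) *
        rho d (fun i => residue R (a i)) (fun i => residue R (b i)) v := by
  have hA1 : residue R A.1 = α * v.1 := by
    have := congrArg Prod.fst hA; simpa [pmap, smul_pair] using this
  have hA2 : residue R A.2 = α * v.2 := by
    have := congrArg Prod.snd hA; simpa [pmap, smul_pair] using this
  have hB1r : residue R B.1 = β * v.1 := by
    have := congrArg Prod.fst hB; simpa [pmap, smul_pair] using this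
  have hB2r : residue R B.2 = β * v.2 := by
    have := congrArg Prod.snd hB; simpa [pmap, smul_pair] using this
  have hαd : α ^ d = α ^ (d-1) * α := by rw [← pow_succ]; congr 1; omega
  by_cases h1 : v.1 ≠ 0
  · -- chart 1 : divide by the first coordinate
    have hu : IsUnit A.1 := by
      rw [← residue_ne_zero_iff_isUnit, hA1]; exact mul_ne_zero hα h1
    set u := hu.unit with hudef
    have huA : (↑u : R) = A.1 := hu.unit_spec
    set s := B.1 * ↑u⁻¹ with hs
    set t := B.2 - s * A.2 with ht
    have hone : A.1 * ↑u⁻¹ = 1 := by rw [← huA]; exact u.mul_inv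
    have hB1 : B.1 = s * A.1 := by
      rw [hs, mul_assoc, mul_comm ((↑u⁻¹ : R)) A.1, hone, mul_one]
    have hB2 : B.2 = s * A.2 + t := by rw [ht]; ring
    set HF := ∑ i : Fin (d+1), a i * (s*A.1) ^ (i:ℕ) * hgeom (d-(i:ℕ)) (s*A.2) t with hHF
    set HG := ∑ i : Fin (d+1), b i * (s*A.1) ^ (i:ℕ) * hgeom (d-(i:ℕ)) (s*A.2) t with hHG
    have hsmul : evalPair d a b (s • A) = s ^ d • evalPair d a b A := evalPair_smul d a b s A
    have hFB1 : (evalPair d a b B).1 = s ^ d * (evalPair d a b A).1 + t * HF := by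
      have h0 : (evalPair d a b B).1
          = ∑ i : Fin (d+1), a i * (s*A.1) ^ (i:ℕ) * ((s*A.2) + t) ^ (d-(i:ℕ)) := by
        simp only [evalPair]
        rw [← hB1, ← hB2]
      have e1 : (evalPair d a b (s • A)).1
          = ∑ i : Fin (d+1), a i * (s*A.1) ^ (i:ℕ) * (s*A.2) ^ (d-(i:ℕ)) := by
        simp [evalPair, smul_pair]
      rw [h0, shift2, ← hHF, ← e1, hsmul, smul_pair]
    have hFB2 : (evalPair d a b B).2 = s ^ d * (evalPair d a b A).2 + t * HG := by
      have h0 : (evalPair d a b B).2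
          = ∑ i : Fin (d+1), b i * (s*A.1) ^ (i:ℕ) * ((s*A.2) + t) ^ (d-(i:ℕ)) := by
        simp only [evalPair]
        rw [← hB1, ← hB2]
      have e1 : (evalPair d a b (s • A)).2
          = ∑ i : Fin (d+1), b i * (s*A.1) ^ (i:ℕ) * (s*A.2) ^ (d-(i:ℕ)) := by
        simp [evalPair, smul_pair]
      rw [h0, shift2, ← hHG, ← e1, hsmul, smul_pair]
    have hress : residue R s = β * v.1 * (α * v.1)⁻¹ := by
      rw [hs, map_mul, res_unit_inv]
      rw [show (↑u : R) = A.1 from huA, hA1, hB1r]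
    have hsα : residue R s * α = β := by rw [hress]; field_simp
    have hsA : pmap (residue R) (s • A) = β • v := by
      rw [pmap_smul, hA, smul_smul, hsα]
    have hsA1 : residue R (s * A.1) = β * v.1 := by
      have := congrArg Prod.fst hsA; simpa [pmap, smul_pair] using this
    have hsA2 : residue R (s * A.2) = β * v.2 := by
      have := congrArg Prod.snd hsA; simpa [pmap, smul_pair] using this
    have hrt : residue R t = 0 := by
      rw [ht, map_sub, hB2r, hsA2, sub_self]
    have hresHF : residue R HF
        = jacMat d (fun i => residue R (a i)) (fun i => residue R (b i)) (β • v) 0 1 := by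
      rw [hHF, map_sum, jacMat01]
      refine Finset.sum_congr rfl fun i _ => ?_
      rw [map_mul, map_mul, map_pow, pmap_hgeom, hrt, hgeom_zero, hsA1, hsA2, smul_pair]
      ring
    have hresHG : residue R HG
        = jacMat d (fun i => residue R (a i)) (fun i => residue R (b i)) (β • v) 1 1 := by
      rw [hHG, map_sum, jacMat11]
      refine Finset.sum_congr rfl fun i _ => ?_
      rw [map_mul, map_mul, map_pow, pmap_hgeom, hrt, hgeom_zero, hsA1, hsA2, smul_pair]
      ring
    have hFA : pmap (residue R) (evalPair d a b A)
        = α ^ d • evalPair d (fun i => residue R (a i)) (fun i => residue R (b i)) v := by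
      rw [← pmap_evalPair, hA, evalPair_smul]
    have hFA1 : residue R ((evalPair d a b A).1)
        = α ^ d * (evalPair d (fun i => residue R (a i)) (fun i => residue R (b i)) v).1 := by
      have := congrArg Prod.fst hFA; simpa [pmap, smul_pair] using this
    have hFA2 : residue R ((evalPair d a b A).2)
        = α ^ d * (evalPair d (fun i => residue R (a i)) (fun i => residue R (b i)) v).2 := by
      have := congrArg Prod.snd hFA; simpa [pmap, smul_pair] using this
    refine ⟨↑u⁻¹ * ((evalPair d a b A).1 * HG - (evalPair d a b A).2 * HF), ?_, ?_⟩
    · have hdet : det2 A B = A.1 * t := by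
        rw [det2, ht]; linear_combination (-A.2) * hB1
      rw [hdet, det2, hFB1, hFB2]
      linear_combination (-(t * ((evalPair d a b A).1 * HG - (evalPair d a b A).2 * HF))) * hone
    · rw [map_mul, map_sub, map_mul, map_mul, hresHF, hresHG, res_unit_inv,
        show (↑u : R) = A.1 from huA, hA1, hFA1, hFA2,
        jacMat_smul01, jacMat_smul11, rho, if_pos h1]
      have hact : det2 (evalPair d (fun i => residue R (a i)) (fun i => residue R (b i)) v)
          (act (jacMat d (fun i => residue R (a i)) (fun i => residue R (b i)) v) (0, 1))
          = (evalPair d (fun i => residue R (a i)) (fun i => residue R (b i)) v).1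
              * jacMat d (fun i => residue R (a i)) (fun i => residue R (b i)) v 1 1
            - (evalPair d (fun i => residue R (a i)) (fun i => residue R (b i)) v).2
              * jacMat d (fun i => residue R (a i)) (fun i => residue R (b i)) v 0 1 := by
        simp [det2, act]
      rw [hact]
      field_simp
      linear_combination ((evalPair d (fun i => residue R (a i)) (fun i => residue R (b i)) v).1
              * jacMat d (fun i => residue R (a i)) (fun i => residue R (b i)) v 1 1
            - (evalPair d (fun i => residue R (a i)) (fun i => residue R (b i)) v).2
              * jacMat d (fun i => residue R (a i)) (fun i => residue R (b i)) v 0 1)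
          * β ^ (d-1) * hαd
  · -- chart 2 : divide by the second coordinate
    push_neg at h1
    have h2 : v.2 ≠ 0 := by
      intro h2; exact hv (Prod.ext h1 h2)
    have hu : IsUnit A.2 := by
      rw [← residue_ne_zero_iff_isUnit, hA2]; exact mul_ne_zero hα h2
    set u := hu.unit with hudef
    have huA : (↑u : R) = A.2 := hu.unit_spec
    set s := B.2 * ↑u⁻¹ with hs
    set t := B.1 - s * A.1 with ht
    have hone : A.2 * ↑u⁻¹ = 1 := by rw [← huA]; exact u.mul_inv
    have hB2 : B.2 = s * A.2 := by
      rw [hs, mul_assoc, mul_comm ((↑u⁻¹ : R)) A.2, hone, mul_one]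
    have hB1 : B.1 = s * A.1 + t := by rw [ht]; ring
    set HF := ∑ i : Fin (d+1), a i * hgeom (i:ℕ) (s*A.1) t * (s*A.2) ^ (d-(i:ℕ)) with hHF
    set HG := ∑ i : Fin (d+1), b i * hgeom (i:ℕ) (s*A.1) t * (s*A.2) ^ (d-(i:ℕ)) with hHG
    have hsmul : evalPair d a b (s • A) = s ^ d • evalPair d a b A := evalPair_smul d a b s A
    have hFB1 : (evalPair d a b B).1 = s ^ d * (evalPair d a b A).1 + t * HF := by
      have h0 : (evalPair d a b B).1
          = ∑ i : Fin (d+1), a i * ((s*A.1) + t) ^ (i:ℕ) * (s*A.2) ^ (d-(i:ℕ)) := by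
        simp only [evalPair]
        rw [← hB1, ← hB2]
      have e1 : (evalPair d a b (s • A)).1
          = ∑ i : Fin (d+1), a i * (s*A.1) ^ (i:ℕ) * (s*A.2) ^ (d-(i:ℕ)) := by
        simp [evalPair, smul_pair]
      rw [h0, shift1, ← hHF, ← e1, hsmul, smul_pair]
    have hFB2 : (evalPair d a b B).2 = s ^ d * (evalPair d a b A).2 + t * HG := by
      have h0 : (evalPair d a b B).2
          = ∑ i : Fin (d+1), b i * ((s*A.1) + t) ^ (i:ℕ) * (s*A.2) ^ (d-(i:ℕ)) := by
        simp only [evalPair]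
        rw [← hB1, ← hB2]
      have e1 : (evalPair d a b (s • A)).2
          = ∑ i : Fin (d+1), b i * (s*A.1) ^ (i:ℕ) * (s*A.2) ^ (d-(i:ℕ)) := by
        simp [evalPair, smul_pair]
      rw [h0, shift1, ← hHG, ← e1, hsmul, smul_pair]
    have hress : residue R s = β * v.2 * (α * v.2)⁻¹ := by
      rw [hs, map_mul, res_unit_inv]
      rw [show (↑u : R) = A.2 from huA, hA2, hB2r]
    have hsα : residue R s * α = β := by rw [hress]; field_simp
    have hsA : pmap (residue R) (s • A) = β • v := by
      rw [pmap_smul, hA, smul_smul, hsα]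
    have hsA1 : residue R (s * A.1) = β * v.1 := by
      have := congrArg Prod.fst hsA; simpa [pmap, smul_pair] using this
    have hsA2 : residue R (s * A.2) = β * v.2 := by
      have := congrArg Prod.snd hsA; simpa [pmap, smul_pair] using this
    have hrt : residue R t = 0 := by
      rw [ht, map_sub, hB1r, hsA1, sub_self]
    have hresHF : residue R HF
        = jacMat d (fun i => residue R (a i)) (fun i => residue R (b i)) (β • v) 0 0 := by
      rw [hHF, map_sum, jacMat00]
      refine Finset.sum_congr rfl fun i _ => ?_
      rw [map_mul, map_mul, map_pow, pmap_hgeom, hrt, hgeom_zero, hsA1, hsA2, smul_pair]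
      ring
    have hresHG : residue R HG
        = jacMat d (fun i => residue R (a i)) (fun i => residue R (b i)) (β • v) 1 0 := by
      rw [hHG, map_sum, jacMat10]
      refine Finset.sum_congr rfl fun i _ => ?_
      rw [map_mul, map_mul, map_pow, pmap_hgeom, hrt, hgeom_zero, hsA1, hsA2, smul_pair]
      ring
    have hFA : pmap (residue R) (evalPair d a b A)
        = α ^ d • evalPair d (fun i => residue R (a i)) (fun i => residue R (b i)) v := by
      rw [← pmap_evalPair, hA, evalPair_smul]
    have hFA1 : residue R ((evalPair d a b A).1)
        = α ^ d * (evalPair d (fun i => residue R (a i)) (fun i => residue R (b i)) v).1 := by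
      have := congrArg Prod.fst hFA; simpa [pmap, smul_pair] using this
    have hFA2 : residue R ((evalPair d a b A).2)
        = α ^ d * (evalPair d (fun i => residue R (a i)) (fun i => residue R (b i)) v).2 := by
      have := congrArg Prod.snd hFA; simpa [pmap, smul_pair] using this
    refine ⟨-↑u⁻¹ * ((evalPair d a b A).1 * HG - (evalPair d a b A).2 * HF), ?_, ?_⟩
    · have hdet : det2 A B = -(A.2 * t) := by
        rw [det2, ht]; linear_combination A.1 * hB2
      rw [hdet, det2, hFB1, hFB2]
      linear_combination (-(t * ((evalPair d a b A).1 * HG - (evalPair d a b A).2 * HF))) * hone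
    · rw [map_mul, map_neg, map_sub, map_mul, map_mul, hresHF, hresHG, res_unit_inv,
        show (↑u : R) = A.2 from huA, hA2, hFA1, hFA2,
        jacMat_smul00, jacMat_smul10, rho, if_neg (by simpa using h1)]
      have hact : det2 (evalPair d (fun i => residue R (a i)) (fun i => residue R (b i)) v)
          (act (jacMat d (fun i => residue R (a i)) (fun i => residue R (b i)) v) (1, 0))
          = (evalPair d (fun i => residue R (a i)) (fun i => residue R (b i)) v).1
              * jacMat d (fun i => residue R (a i)) (fun i => residue R (b i)) v 1 0
            - (evalPair d (fun i => residue R (a i)) (fun i => residue R (b i)) v).2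
              * jacMat d (fun i => residue R (a i)) (fun i => residue R (b i)) v 0 0 := by
        simp [det2, act]
      rw [hact]
      field_simp
      linear_combination (-((evalPair d (fun i => residue R (a i)) (fun i => residue R (b i)) v).1
              * jacMat d (fun i => residue R (a i)) (fun i => residue R (b i)) v 1 0
            - (evalPair d (fun i => residue R (a i)) (fun i => residue R (b i)) v).2
              * jacMat d (fun i => residue R (a i)) (fun i => residue R (b i)) v 0 0))
          * β ^ (d-1) * hαd

lemma block_factor (d : ℕ) (hd : 1 ≤ d) (a b : Fin (d+1) → R) (A B : R × R)
    (v : ResidueField R × ResidueField R) (α β : ResidueField R)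
    (hα : α ≠ 0) (hβ : β ≠ 0)
    (hA : pmap (residue R) A = α • v) (hB : pmap (residue R) B = β • v)
    (M : ℕ)
    (hvi : ∀ i, i < M →
      (evalPair d (fun i => residue R (a i)) (fun i => residue R (b i)))^[i] v ≠ 0) :
    ∃ E : R, det2 ((evalPair d a b)^[M] A) ((evalPair d a b)^[M] B) = det2 A B * E ∧
      residue R E = (α * β) ^ (d ^ M - 1) *
        ∏ i ∈ Finset.range M,
          rho d (fun i => residue R (a i)) (fun i => residue R (b i))
            ((evalPair d (fun i => residue R (a i)) (fun i => residue R (b i)))^[i] v) := by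
  induction M with
  | zero => exact ⟨1, by simp⟩
  | succ M ih =>
    obtain ⟨E1, hE1, hE1res⟩ := ih (fun i hi => hvi i (Nat.lt_succ_of_lt hi))
    have hA' : pmap (residue R) ((evalPair d a b)^[M] A)
        = α ^ (d ^ M) •
          (evalPair d (fun i => residue R (a i)) (fun i => residue R (b i)))^[M] v := by
      rw [← pmap_evalPair_iterate, hA, evalPair_iterate_smul]
    have hB' : pmap (residue R) ((evalPair d a b)^[M] B)
        = β ^ (d ^ M) •
          (evalPair d (fun i => residue R (a i)) (fun i => residue R (b i)))^[M] v := by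
      rw [← pmap_evalPair_iterate, hB, evalPair_iterate_smul]
    obtain ⟨E2, hE2, hE2res⟩ := step_factor d hd a b ((evalPair d a b)^[M] A)
      ((evalPair d a b)^[M] B) _ (hvi M (Nat.lt_succ_self M))
      (α ^ (d ^ M)) (β ^ (d ^ M)) (pow_ne_zero _ hα) hA' hB'
    refine ⟨E1 * E2, ?_, ?_⟩
    · rw [Function.iterate_succ_apply', Function.iterate_succ_apply', hE2, hE1]; ring
    · rw [map_mul, hE1res, hE2res, Finset.prod_range_succ]
      have hexp : d ^ M - 1 + d ^ M * (d - 1) = d ^ (M+1) - 1 := by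
        obtain ⟨e, rfl⟩ : ∃ e, d = e + 1 := ⟨d - 1, by omega⟩
        simp only [Nat.add_sub_cancel]
        have h1 : 1 ≤ (e+1) ^ M := Nat.one_le_pow _ _ (by omega)
        have h2 : (e+1) ^ (M+1) = (e+1)^M * e + (e+1)^M := by rw [pow_succ]; ring
        rw [h2]
        set z := (e+1)^M * e with hz
        omega
      have key : (α * β) ^ (d ^ M - 1)
            * ((α ^ (d ^ M)) ^ (d-1) * (β ^ (d ^ M)) ^ (d-1))
          = (α * β) ^ (d ^ (M+1) - 1) := by
        rw [← pow_mul, ← pow_mul, ← mul_pow, ← pow_add, hexp]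
      linear_combination ((∏ i ∈ Finset.range M,
          rho d (fun i => residue R (a i)) (fun i => residue R (b i))
            ((evalPair d (fun i => residue R (a i)) (fun i => residue R (b i)))^[i] v)) *
          rho d (fun i => residue R (a i)) (fun i => residue R (b i))
            ((evalPair d (fun i => residue R (a i)) (fun i => residue R (b i)))^[M] v)) * key

lemma norm_step (d : ℕ) (hd : 1 ≤ d) (a b : Fin (d+1) → R)
    (hgood : IsUnit (resultant d a b)) (P : R × R) (hP : IsUnit P.1 ∨ IsUnit P.2) :
    IsUnit (evalPair d a b P).1 ∨ IsUnit (evalPair d a b P).2 := by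
  by_contra hcon
  push_neg at hcon
  obtain ⟨hF, hG⟩ := hcon
  have hFm : (evalPair d a b P).1 ∈ maximalIdeal R :=
    (mem_maximalIdeal _).mpr (mem_nonunits_iff.mpr hF)
  have hGm : (evalPair d a b P).2 ∈ maximalIdeal R :=
    (mem_maximalIdeal _).mpr (mem_nonunits_iff.mpr hG)
  set vec : Fin (d+d) → R := fun j => P.2 ^ (d + d - 1 - (j:ℕ)) * P.1 ^ (j:ℕ) with hvec
  have hrow : ∀ i : Fin (d+d), Matrix.mulVec (sylvester d a b) vec i ∈ maximalIdeal R := by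
    intro i
    have hsum : Matrix.mulVec (sylvester d a b) vec i = ∑ j, sylvester d a b i j * vec j := by
      simp [Matrix.mulVec, dotProduct]
    rw [hsum]
    by_cases hi : (i:ℕ) < d
    · have hival : (∑ j, sylvester d a b i j * vec j)
          = P.2 ^ (d-1-(i:ℕ)) * P.1 ^ (i:ℕ) * (evalPair d a b P).1 := by
        classical
        rw [← Finset.sum_filter_add_sum_filter_not Finset.univ
          (fun j : Fin (d+d) => (i:ℕ) ≤ (j:ℕ) ∧ (j:ℕ) ≤ (i:ℕ) + d)]
        have hz : ∑ j ∈ Finset.filter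
            (fun j : Fin (d+d) => ¬((i:ℕ) ≤ (j:ℕ) ∧ (j:ℕ) ≤ (i:ℕ) + d)) Finset.univ,
            sylvester d a b i j * vec j = 0 := by
          refine Finset.sum_eq_zero fun j hj => ?_
          have hj' := (Finset.mem_filter.mp hj).2
          rw [sylvester, dif_pos hi, dif_neg hj', zero_mul]
        rw [hz, add_zero]
        have hmain : ∑ j ∈ Finset.filter
            (fun j : Fin (d+d) => (i:ℕ) ≤ (j:ℕ) ∧ (j:ℕ) ≤ (i:ℕ) + d) Finset.univ,
            sylvester d a b i j * vec j
            = ∑ τ : Fin (d+1), a τ * (P.2 ^ (d-1-(i:ℕ)) * P.1 ^ (i:ℕ)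
                * (P.1 ^ (τ:ℕ) * P.2 ^ (d - (τ:ℕ)))) := by
          refine Finset.sum_bij' (fun j hj => (⟨(j:ℕ) - (i:ℕ), by
              have := (Finset.mem_filter.mp hj).2; omega⟩ : Fin (d+1)))
            (fun τ _ => (⟨(i:ℕ) + (τ:ℕ), by omega⟩ : Fin (d+d))) ?_ ?_ ?_ ?_ ?_
          · intro j hj; exact Finset.mem_univ _
          · intro τ _
            refine Finset.mem_filter.mpr ⟨Finset.mem_univ _, ?_⟩
            constructor <;> simp <;> omega
          · intro j hj
            have := (Finset.mem_filter.mp hj).2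
            apply Fin.ext; simp; omega
          · intro τ _
            apply Fin.ext; simp
          · intro j hj
            have hj' := (Finset.mem_filter.mp hj).2
            rw [sylvester, dif_pos hi, dif_pos hj']
            have h1 : P.1 ^ (j:ℕ) = P.1 ^ (i:ℕ) * P.1 ^ ((j:ℕ) - (i:ℕ)) := by
              rw [← pow_add]; congr 1; omega
            have h2 : P.2 ^ (d + d - 1 - (j:ℕ))
                = P.2 ^ (d-1-(i:ℕ)) * P.2 ^ (d - ((j:ℕ) - (i:ℕ))) := by
              rw [← pow_add]; congr 1; omega
            rw [hvec]; simp only []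
            rw [h1, h2]; ring
        rw [hmain]
        simp only [evalPair]
        rw [Finset.mul_sum]
        refine Finset.sum_congr rfl fun τ _ => ?_
        ring
      rw [hival]
      exact Ideal.mul_mem_left _ _ hFm
    · have hival : (∑ j, sylvester d a b i j * vec j)
          = P.2 ^ (d+d-1-(i:ℕ)) * P.1 ^ ((i:ℕ)-d) * (evalPair d a b P).2 := by
        classical
        rw [← Finset.sum_filter_add_sum_filter_not Finset.univ
          (fun j : Fin (d+d) => (i:ℕ) - d ≤ (j:ℕ) ∧ (j:ℕ) ≤ (i:ℕ))]
        have hz : ∑ j ∈ Finset.filter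
            (fun j : Fin (d+d) => ¬((i:ℕ) - d ≤ (j:ℕ) ∧ (j:ℕ) ≤ (i:ℕ))) Finset.univ,
            sylvester d a b i j * vec j = 0 := by
          refine Finset.sum_eq_zero fun j hj => ?_
          have hj' := (Finset.mem_filter.mp hj).2
          rw [sylvester, dif_neg hi, dif_neg hj', zero_mul]
        rw [hz, add_zero]
        have hmain : ∑ j ∈ Finset.filter
            (fun j : Fin (d+d) => (i:ℕ) - d ≤ (j:ℕ) ∧ (j:ℕ) ≤ (i:ℕ)) Finset.univ,
            sylvester d a b i j * vec j
            = ∑ τ : Fin (d+1), b τ * (P.2 ^ (d+d-1-(i:ℕ)) * P.1 ^ ((i:ℕ)-d)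
                * (P.1 ^ (τ:ℕ) * P.2 ^ (d - (τ:ℕ)))) := by
          have hi2 : (i:ℕ) < d + d := i.isLt
          refine Finset.sum_bij' (fun j hj => (⟨(j:ℕ) - ((i:ℕ) - d), by
              have := (Finset.mem_filter.mp hj).2; omega⟩ : Fin (d+1)))
            (fun τ _ => (⟨((i:ℕ) - d) + (τ:ℕ), by omega⟩ : Fin (d+d))) ?_ ?_ ?_ ?_ ?_
          · intro j hj; exact Finset.mem_univ _
          · intro τ _
            refine Finset.mem_filter.mpr ⟨Finset.mem_univ _, ?_⟩
            constructor <;> simp <;> omega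
          · intro j hj
            have := (Finset.mem_filter.mp hj).2
            apply Fin.ext; simp; omega
          · intro τ _
            apply Fin.ext; simp
          · intro j hj
            have hj' := (Finset.mem_filter.mp hj).2
            rw [sylvester, dif_neg hi, dif_pos hj']
            have h1 : P.1 ^ (j:ℕ) = P.1 ^ ((i:ℕ)-d) * P.1 ^ ((j:ℕ) - ((i:ℕ)-d)) := by
              rw [← pow_add]; congr 1; omega
            have h2 : P.2 ^ (d + d - 1 - (j:ℕ))
                = P.2 ^ (d+d-1-(i:ℕ)) * P.2 ^ (d - ((j:ℕ) - ((i:ℕ)-d))) := by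
              rw [← pow_add]; congr 1; omega
            rw [hvec]; simp only []
            rw [h1, h2]; ring
        rw [hmain]
        simp only [evalPair]
        rw [Finset.mul_sum]
        refine Finset.sum_congr rfl fun τ _ => ?_
        ring
      rw [hival]
      exact Ideal.mul_mem_left _ _ hGm
  have hdet : ∀ j : Fin (d+d), (resultant d a b) * vec j ∈ maximalIdeal R := by
    intro j
    have hv : (resultant d a b) • vec
        = (sylvester d a b).adjugate.mulVec ((sylvester d a b).mulVec vec) := by
      rw [Matrix.mulVec_mulVec, Matrix.adjugate_mul, Matrix.smul_mulVec,
        Matrix.one_mulVec]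
      rfl
    have := congrFun hv j
    rw [Pi.smul_apply, smul_eq_mul] at this
    rw [this]
    have hsum : (sylvester d a b).adjugate.mulVec ((sylvester d a b).mulVec vec) j
        = ∑ i, (sylvester d a b).adjugate j i * (sylvester d a b).mulVec vec i := by
      simp [Matrix.mulVec, dotProduct]
    rw [hsum]
    exact Ideal.sum_mem _ fun i _ => Ideal.mul_mem_left _ _ (hrow i)
  have hprime : (maximalIdeal R).IsPrime := (maximalIdeal.isMaximal R).isPrime
  have hd2 : 0 < d + d := by omega
  have hP2 : P.2 ∈ maximalIdeal R := by
    have h0 := hdet ⟨0, hd2⟩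
    rw [(maximalIdeal R).unit_mul_mem_iff_mem hgood] at h0
    have : P.2 ^ (d + d - 1) ∈ maximalIdeal R := by
      simpa [hvec] using h0
    exact hprime.mem_of_pow_mem _ this
  have hP1 : P.1 ∈ maximalIdeal R := by
    have h0 := hdet ⟨d + d - 1, by omega⟩
    rw [(maximalIdeal R).unit_mul_mem_iff_mem hgood] at h0
    have : P.1 ^ (d + d - 1) ∈ maximalIdeal R := by
      simpa [hvec] using h0
    exact hprime.mem_of_pow_mem _ this
  rcases hP with h | h
  · exact (mem_nonunits_iff.mp ((mem_maximalIdeal _).mp hP1)) h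
  · exact (mem_nonunits_iff.mp ((mem_maximalIdeal _).mp hP2)) h

end LocalPart

section Pezda

open IsLocalRing

variable {R : Type} [CommRing R] [IsLocalRing R] [IsDomain R]

lemma pezda_shift (z : ℕ → R) (lam : ResidueField R)
    (H1 : ∀ i j : ℕ, ∃ w : R, z (i+1) - z (j+1) = (z i - z j) * w ∧ residue R w = lam) :
    ∀ s i j : ℕ, ∃ w : R, z (i+s) - z (j+s) = (z i - z j) * w ∧ residue R w = lam ^ s := by
  intro s
  induction s with
  | zero => intro i j; exact ⟨1, by simp, by simp⟩
  | succ s ih =>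
    intro i j
    obtain ⟨w1, hw1, hw1r⟩ := ih i j
    obtain ⟨w2, hw2, hw2r⟩ := H1 (i+s) (j+s)
    refine ⟨w1 * w2, ?_, by rw [map_mul, hw1r, hw2r, pow_succ]⟩
    rw [show i+(s+1) = (i+s)+1 from rfl, show j+(s+1) = (j+s)+1 from rfl, hw2, hw1]
    ring

lemma pezda_telescope (z : ℕ → R) (lam : ResidueField R)
    (H1 : ∀ i j : ℕ, ∃ w : R, z (i+1) - z (j+1) = (z i - z j) * w ∧ residue R w = lam)
    (κ : ℕ) (H2 : z κ = z 0) (H3 : z 1 ≠ z 0) :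
    (∑ j ∈ Finset.range κ, lam ^ j) = 0 := by
  choose w hw hwr using fun j => H1 (j+1) j
  have hdiff : ∀ j, z (j+1) - z j = (z 1 - z 0) * ∏ i ∈ Finset.range j, w i := by
    intro j
    induction j with
    | zero => simp
    | succ j ih => rw [hw j, ih, Finset.prod_range_succ]; ring
  have hsum : z κ - z 0 = (z 1 - z 0) * ∑ j ∈ Finset.range κ, ∏ i ∈ Finset.range j, w i := by
    rw [Finset.mul_sum, ← Finset.sum_range_sub (fun j => z j)]
    exact Finset.sum_congr rfl fun j _ => hdiff j
  rw [H2, sub_self] at hsum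
  have hS : (∑ j ∈ Finset.range κ, ∏ i ∈ Finset.range j, w i) = 0 := by
    rcases mul_eq_zero.mp hsum.symm with h | h
    · exact absurd (sub_eq_zero.mp h) H3
    · exact h
  have hres := congrArg (residue R) hS
  rw [map_sum, map_zero] at hres
  rw [← hres]
  refine Finset.sum_congr rfl fun j _ => ?_
  rw [map_prod]
  rw [Finset.prod_congr rfl (fun i _ => hwr i), Finset.prod_const, Finset.card_range]

lemma pezda1 (κ : ℕ) : 0 < κ → ∀ z : ℕ → R,
    (∀ i j : ℕ, ∃ w : R, z (i+1) - z (j+1) = (z i - z j) * w ∧ residue R w = 1) →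
    z κ = z 0 → (∀ j, 0 < j → j < κ → z j ≠ z 0) →
    ∃ e : ℕ, κ = ringChar (ResidueField R) ^ e := by
  induction κ using Nat.strong_induction_on with
  | _ κ IH =>
    intro hκ z H1 H2 H3
    rcases eq_or_lt_of_le (Nat.one_le_iff_ne_zero.mpr (Nat.pos_iff_ne_zero.mp hκ)) with h1 | h2
    · exact ⟨0, by rw [pow_zero, ← h1]⟩
    · have hκ2 : 2 ≤ κ := h2
      have hsum := pezda_telescope z 1 H1 κ H2 (H3 1 one_pos (by omega))
      simp only [one_pow, Finset.sum_const, Finset.card_range, nsmul_eq_mul, mul_one] at hsum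
      haveI : CharP (ResidueField R) (ringChar (ResidueField R)) := ringChar.charP _
      have hp : ringChar (ResidueField R) ∣ κ :=
        (CharP.cast_eq_zero_iff (ResidueField R) (ringChar (ResidueField R)) κ).mp hsum
      set p := ringChar (ResidueField R) with hpdef
      have hp0 : p ≠ 0 := by
        intro h; rw [h] at hp
        exact absurd (zero_dvd_iff.mp hp) (by omega)
      have hpprime : p.Prime :=
        (CharP.char_is_prime_or_zero (ResidueField R) p).resolve_right hp0
      obtain ⟨κ', hκ'⟩ := hp
      have hp2 : 2 ≤ p := hpprime.two_le
      have hκ'pos : 0 < κ' := by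
        rcases Nat.eq_zero_or_pos κ' with h | h
        · rw [h, mul_zero] at hκ'; omega
        · exact h
      have hκ'lt : κ' < κ := by
        rw [hκ']; nlinarith
      obtain ⟨e, he⟩ := IH κ' hκ'lt hκ'pos (fun j => z (p * j))
        (fun i j => by
          obtain ⟨w, hw, hwr⟩ := pezda_shift z 1 H1 p (p*i) (p*j)
          refine ⟨w, ?_, ?_⟩
          · show z (p*(i+1)) - z (p*(j+1)) = (z (p*i) - z (p*j)) * w
            rw [Nat.mul_add, Nat.mul_one]
            exact hw
          · rw [hwr, one_pow])
        (by show z (p * κ') = z (p * 0); rw [← hκ', Nat.mul_zero]; exact H2)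
        (fun j hj hjκ => by
          show z (p*j) ≠ z (p*0)
          rw [Nat.mul_zero]
          exact H3 (p*j) (by positivity)
            (by rw [hκ']; exact (Nat.mul_lt_mul_left (by omega)).mpr hjκ))
      exact ⟨e + 1, by rw [hκ', he, pow_succ]; ring⟩

lemma pezda (z : ℕ → R) (lam : ResidueField R)
    (H1 : ∀ i j : ℕ, ∃ w : R, z (i+1) - z (j+1) = (z i - z j) * w ∧ residue R w = lam)
    (κ : ℕ) (hκ : 0 < κ) (H2 : z κ = z 0) (H3 : ∀ j, 0 < j → j < κ → z j ≠ z 0) :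
    κ = 1 ∨ (lam ≠ 0 ∧ ∃ r : ℕ, 0 < r ∧ lam ^ r = 1 ∧
      (∀ s : ℕ, 0 < s → lam ^ s = 1 → r ≤ s) ∧
      (κ = r ∨ ∃ e : ℕ, 1 ≤ e ∧ κ = ringChar (ResidueField R) ^ e * r)) := by
  rcases eq_or_lt_of_le (Nat.one_le_iff_ne_zero.mpr (Nat.pos_iff_ne_zero.mp hκ)) with h1 | hκ2
  · exact Or.inl h1.symm
  right
  have hsum := pezda_telescope z lam H1 κ H2 (H3 1 one_pos (by omega))
  have hlam0 : lam ≠ 0 := by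
    intro h
    rw [h] at hsum
    have : (∑ j ∈ Finset.range κ, (0:ResidueField R) ^ j) = 1 := by
      rw [Finset.sum_congr rfl (fun j _ => zero_pow_eq j)]
      rw [Finset.sum_ite_eq' (Finset.range κ) 0 (fun _ => (1 : ResidueField R))]
      simp [Finset.mem_range]; omega
    rw [hsum] at this
    exact one_ne_zero this.symm
  have hκ1 : lam ^ κ = 1 := by
    have hg := geom_sum_mul lam κ
    rw [hsum, zero_mul] at hg
    exact sub_eq_zero.mp hg.symm
  have hfin : IsOfFinOrder lam := isOfFinOrder_iff_pow_eq_one.mpr ⟨κ, hκ, hκ1⟩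
  refine ⟨hlam0, orderOf lam, orderOf_pos_iff.mpr hfin, pow_orderOf_eq_one lam,
    fun s hs hpow => orderOf_le_of_pow_eq_one hs hpow, ?_⟩
  have hrdvd : orderOf lam ∣ κ := orderOf_dvd_of_pow_eq_one hκ1
  set r := orderOf lam with hrdef
  have hrpos : 0 < r := orderOf_pos_iff.mpr hfin
  obtain ⟨κ', hκ'⟩ := hrdvd
  have hκ'pos : 0 < κ' := by
    rcases Nat.eq_zero_or_pos κ' with h | h
    · rw [h, mul_zero] at hκ'; omega
    · exact h
  obtain ⟨e, he⟩ := pezda1 κ' hκ'pos (fun j => z (r * j))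
    (fun i j => by
      obtain ⟨w, hw, hwr⟩ := pezda_shift z lam H1 r (r*i) (r*j)
      refine ⟨w, ?_, ?_⟩
      · show z (r*(i+1)) - z (r*(j+1)) = (z (r*i) - z (r*j)) * w
        rw [Nat.mul_add, Nat.mul_one]
        exact hw
      · rw [hwr, pow_orderOf_eq_one])
    (by show z (r * κ') = z (r * 0); rw [← hκ', Nat.mul_zero]; exact H2)
    (fun j hj hjκ => by
      show z (r*j) ≠ z (r*0)
      rw [Nat.mul_zero]
      exact H3 (r*j) (by positivity)
        (by rw [hκ']; exact (Nat.mul_lt_mul_left hrpos).mpr hjκ))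
  rcases Nat.eq_zero_or_pos e with he0 | he1
  · left; rw [he0, pow_zero] at he; rw [hκ', he, mul_one]
  · right; exact ⟨e, he1, by rw [hκ', he]; ring⟩

end Pezda

section FracPart

open IsLocalRing

variable {R : Type} [CommRing R] [IsLocalRing R] [IsDomain R]

lemma unit_ne_zero_map {x : R} (hx : IsUnit x) :
    algebraMap R (FractionRing R) x ≠ 0 := by
  intro h
  have hinj : Function.Injective (algebraMap R (FractionRing R)) :=
    IsFractionRing.injective R (FractionRing R)
  have hx0 : x = 0 := by
    apply hinj
    rw [h, map_zero]
  exact hx.ne_zero (by exact hx0)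

lemma K_scalar1 (P Q : R × R) (huP : IsUnit P.1) (huQ : IsUnit Q.1)
    (hcross : P.1 * Q.2 = P.2 * Q.1) :
    ∃ c : FractionRing R, c ≠ 0 ∧
      (algebraMap R (FractionRing R) Q.1, algebraMap R (FractionRing R) Q.2)
        = c • (algebraMap R (FractionRing R) P.1, algebraMap R (FractionRing R) P.2) := by
  set σ := algebraMap R (FractionRing R)
  have hP1 : σ P.1 ≠ 0 := unit_ne_zero_map huP
  have hQ1 : σ Q.1 ≠ 0 := unit_ne_zero_map huQ
  refine ⟨σ Q.1 / σ P.1, div_ne_zero hQ1 hP1, ?_⟩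
  rw [smul_pair]
  refine Prod.ext ?_ ?_
  · show σ Q.1 = σ Q.1 / σ P.1 * σ P.1
    field_simp
  · show σ Q.2 = σ Q.1 / σ P.1 * σ P.2
    rw [div_mul_eq_mul_div, eq_div_iff hP1, ← map_mul, ← map_mul]
    congr 1
    linear_combination hcross

lemma K_scalar2 (P Q : R × R) (huP : IsUnit P.2) (huQ : IsUnit Q.2)
    (hcross : P.2 * Q.1 = P.1 * Q.2) :
    ∃ c : FractionRing R, c ≠ 0 ∧
      (algebraMap R (FractionRing R) Q.1, algebraMap R (FractionRing R) Q.2)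
        = c • (algebraMap R (FractionRing R) P.1, algebraMap R (FractionRing R) P.2) := by
  set σ := algebraMap R (FractionRing R)
  have hP2 : σ P.2 ≠ 0 := unit_ne_zero_map huP
  have hQ2 : σ Q.2 ≠ 0 := unit_ne_zero_map huQ
  refine ⟨σ Q.2 / σ P.2, div_ne_zero hQ2 hP2, ?_⟩
  rw [smul_pair]
  refine Prod.ext ?_ ?_
  · show σ Q.1 = σ Q.2 / σ P.2 * σ P.1
    rw [div_mul_eq_mul_div, eq_div_iff hP2, ← map_mul, ← map_mul]
    congr 1
    linear_combination hcross
  · show σ Q.2 = σ Q.2 / σ P.2 * σ P.2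
    field_simp

lemma exists_cR (d : ℕ) (a b : Fin (d+1) → R)
    (P : R × R) (hP : IsUnit P.1 ∨ IsUnit P.2) (n : ℕ)
    (c : FractionRing R) (hc0 : c ≠ 0)
    (hc : (evalPair d (fun i => algebraMap R (FractionRing R) (a i))
        (fun i => algebraMap R (FractionRing R) (b i)))^[n]
          (algebraMap R (FractionRing R) P.1, algebraMap R (FractionRing R) P.2)
        = c • (algebraMap R (FractionRing R) P.1, algebraMap R (FractionRing R) P.2))
    (hnorm : IsUnit ((evalPair d a b)^[n] P).1 ∨ IsUnit ((evalPair d a b)^[n] P).2) :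
    ∃ cR : R, IsUnit cR ∧ (evalPair d a b)^[n] P = cR • P := by
  set σ := algebraMap R (FractionRing R) with hσ
  have hinj : Function.Injective σ := IsFractionRing.injective R (FractionRing R)
  set Q := (evalPair d a b)^[n] P with hQdef
  have hit : pmap σ Q = c • pmap σ P := by
    rw [hQdef, ← pmap_evalPair_iterate]
    exact hc
  have h1 : σ Q.1 = c * σ P.1 := by
    have := congrArg Prod.fst hit; simpa [pmap, smul_pair] using this
  have h2 : σ Q.2 = c * σ P.2 := by
    have := congrArg Prod.snd hit; simpa [pmap, smul_pair] using this
  have main : ∀ cR : R, σ cR = c → ∃ cR' : R, IsUnit cR' ∧ Q = cR' • P := by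
    intro cR hcR
    have hq1 : Q.1 = cR * P.1 := by
      apply hinj; rw [map_mul, hcR, h1]
    have hq2 : Q.2 = cR * P.2 := by
      apply hinj; rw [map_mul, hcR, h2]
    refine ⟨cR, ?_, by rw [smul_pair, ← hq1, ← hq2]⟩
    rw [← residue_ne_zero_iff_isUnit]
    intro h0
    rcases hnorm with hu | hu
    · have hne : residue R Q.1 ≠ 0 := (residue_ne_zero_iff_isUnit Q.1).mpr hu
      apply hne
      rw [hq1, map_mul, h0, zero_mul]
    · have hne : residue R Q.2 ≠ 0 := (residue_ne_zero_iff_isUnit Q.2).mpr hu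
      apply hne
      rw [hq2, map_mul, h0, zero_mul]
  rcases hP with hu | hu
  · refine main (Q.1 * ↑hu.unit⁻¹) ?_
    have hone : σ P.1 * σ ↑hu.unit⁻¹ = 1 := by
      have h := hu.unit.mul_inv
      rw [hu.unit_spec] at h
      rw [← map_mul, h, map_one]
    rw [map_mul, h1, mul_assoc, hone, mul_one]
  · refine main (Q.2 * ↑hu.unit⁻¹) ?_
    have hone : σ P.2 * σ ↑hu.unit⁻¹ = 1 := by
      have h := hu.unit.mul_inv
      rw [hu.unit_spec] at h
      rw [← map_mul, h, map_one]
    rw [map_mul, h2, mul_assoc, hone, mul_one]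
end FracPart

end MSZ

open MSZ

/-- **Morton–Silverman, Zieve.**  Let `R` be a discrete valuation ring with fraction
field `K` and residue field `k(v)`, and let `φ = [F:G]` be an endomorphism of `ℙ¹` of
degree `d ≥ 2` defined over `K`, written in `v`-reduced form (coefficients in `R`,
at least one a unit), with good reduction at `v` (`Res(F,G)` is a unit of `R`).
Let `P ∈ ℙ¹(K)`, written in normalized coordinates over `R`, be periodic for `φ` with
minimal period `n`, let `m` be the minimal period of the reduction of `P` modulo `v`
for the reduced map `φ_v`, and let `lam = (φ_v^m)'(P mod v)` be the multiplier of the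
reduced cycle (computed homogeneously: if `M` is the Jacobian of the `m`-th iterate of
the reduction of `(F,G)` at `P mod v` and `φ_v^m(P mod v) = C • (P mod v)`, then
`lam = trace(M)/C − d^m`).  Then `n = m`, or `n = mr`, or `n = p^e·m·r` with `e ≥ 1`,
where `r` is the multiplicative order of `lam` in `k(v)*` (the latter two cases being
possible only when `lam ≠ 0` and the order is finite), and `p` is the characteristic
of the residue field `k(v)`. -/

theorem morton_silverman_zieve
    (R : Type) [CommRing R] [IsDomain R] [IsDiscreteValuationRing R]
    (d : ℕ) (hd : 2 ≤ d) (a b : Fin (d+1) → R)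
    (hred : (∃ i, IsUnit (a i)) ∨ (∃ i, IsUnit (b i)))
    (hgood : IsUnit (resultant d a b))
    (P : R × R) (hP : IsUnit P.1 ∨ IsUnit P.2)
    (n : ℕ) (hn : 0 < n)
    (hper : ∃ c : FractionRing R, c ≠ 0 ∧
      (evalPair d (fun i => algebraMap R (FractionRing R) (a i))
        (fun i => algebraMap R (FractionRing R) (b i)))^[n]
          (algebraMap R (FractionRing R) P.1, algebraMap R (FractionRing R) P.2) =
        c • (algebraMap R (FractionRing R) P.1, algebraMap R (FractionRing R) P.2))
    (hmin : ∀ m' : ℕ, 0 < m' →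
      (∃ c : FractionRing R, c ≠ 0 ∧
        (evalPair d (fun i => algebraMap R (FractionRing R) (a i))
          (fun i => algebraMap R (FractionRing R) (b i)))^[m']
            (algebraMap R (FractionRing R) P.1, algebraMap R (FractionRing R) P.2) =
          c • (algebraMap R (FractionRing R) P.1, algebraMap R (FractionRing R) P.2)) →
      n ≤ m')
    (m : ℕ) (hm : 0 < m)
    (C : IsLocalRing.ResidueField R) (hC : C ≠ 0)
    (hmper : (evalPair d (fun i => IsLocalRing.residue R (a i))
        (fun i => IsLocalRing.residue R (b i)))^[m]
          (IsLocalRing.residue R P.1, IsLocalRing.residue R P.2) =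
        C • (IsLocalRing.residue R P.1, IsLocalRing.residue R P.2))
    (hmmin : ∀ m' : ℕ, 0 < m' →
      (∃ C' : IsLocalRing.ResidueField R, C' ≠ 0 ∧
        (evalPair d (fun i => IsLocalRing.residue R (a i))
          (fun i => IsLocalRing.residue R (b i)))^[m']
            (IsLocalRing.residue R P.1, IsLocalRing.residue R P.2) =
          C' • (IsLocalRing.residue R P.1, IsLocalRing.residue R P.2)) →
      m ≤ m')
    (lam : IsLocalRing.ResidueField R)
    (hlam : lam = Matrix.trace
        (jacProd d (fun i => IsLocalRing.residue R (a i))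
          (fun i => IsLocalRing.residue R (b i))
          (IsLocalRing.residue R P.1, IsLocalRing.residue R P.2) m) / C -
      ((d ^ m : ℕ) : IsLocalRing.ResidueField R)) :
    n = m ∨
      (lam ≠ 0 ∧ ∃ r : ℕ, 0 < r ∧ lam ^ r = 1 ∧
        (∀ s : ℕ, 0 < s → lam ^ s = 1 → r ≤ s) ∧
        (n = m * r ∨ ∃ e : ℕ, 1 ≤ e ∧
          n = (ringChar (IsLocalRing.ResidueField R)) ^ e * (m * r))) := by
  classical
  have hd1 : 1 ≤ d := by omega
  set v : IsLocalRing.ResidueField R × IsLocalRing.ResidueField R :=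
    (IsLocalRing.residue R P.1, IsLocalRing.residue R P.2) with hvdef
  have hvP : pmap (IsLocalRing.residue R) P = v := rfl
  -- normalization of all iterates
  have hnormj : ∀ j, IsUnit ((evalPair d a b)^[j] P).1 ∨ IsUnit ((evalPair d a b)^[j] P).2 := by
    intro j
    induction j with
    | zero => exact hP
    | succ j ih =>
      rw [Function.iterate_succ_apply']
      exact norm_step d hd1 a b hgood _ ih
  have hresit : ∀ j, pmap (IsLocalRing.residue R) ((evalPair d a b)^[j] P)
      = (evalPair d (fun i => IsLocalRing.residue R (a i))
          (fun i => IsLocalRing.residue R (b i)))^[j] v := by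
    intro j
    rw [← hvP, pmap_evalPair_iterate]
  have hvj : ∀ j, (evalPair d (fun i => IsLocalRing.residue R (a i))
      (fun i => IsLocalRing.residue R (b i)))^[j] v ≠ 0 := by
    intro j h0
    rw [← hresit j] at h0
    rcases hnormj j with hu | hu
    · have h1 : IsLocalRing.residue R (((evalPair d a b)^[j] P).1) = 0 := by
        have := congrArg Prod.fst h0; simpa [pmap] using this
      exact (IsLocalRing.residue_ne_zero_iff_isUnit _).mpr hu h1
    · have h1 : IsLocalRing.residue R (((evalPair d a b)^[j] P).2) = 0 := by
        have := congrArg Prod.snd h0; simpa [pmap] using this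
      exact (IsLocalRing.residue_ne_zero_iff_isUnit _).mpr hu h1
  have hv0 : v ≠ 0 := by
    have := hvj 0
    simpa using this
  -- the scalar orbit sequence
  set g : ℕ → IsLocalRing.ResidueField R :=
    fun j => Nat.rec (motive := fun _ => IsLocalRing.ResidueField R) 1
      (fun _ gj => gj ^ (d ^ m) * C) j with hgdef
  have hg0 : g 0 = 1 := rfl
  have hgs : ∀ j, g (j+1) = g j ^ (d ^ m) * C := fun j => rfl
  have hgne : ∀ j, g j ≠ 0 := by
    intro j
    induction j with
    | zero => rw [hg0]; exact one_ne_zero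
    | succ j ih => rw [hgs]; exact mul_ne_zero (pow_ne_zero _ ih) hC
  have hgv : ∀ j, (evalPair d (fun i => IsLocalRing.residue R (a i))
      (fun i => IsLocalRing.residue R (b i)))^[j*m] v = g j • v := by
    intro j
    induction j with
    | zero => simp [hg0]
    | succ j ih =>
      rw [show (j+1)*m = m + j*m from by ring, Function.iterate_add_apply, ih,
        evalPair_iterate_smul, hmper, smul_smul, hgs]
  -- periodicity over R with a unit scalar
  obtain ⟨c, hc0, hc⟩ := hper
  obtain ⟨cR, hcRu, hQn⟩ := exists_cR d a b P hP n c hc0 hc (hnormj n)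
  have hresn : (evalPair d (fun i => IsLocalRing.residue R (a i))
      (fun i => IsLocalRing.residue R (b i)))^[n] v = IsLocalRing.residue R cR • v := by
    rw [← hresit n, hQn, pmap_smul, hvP]
  have hrescR : IsLocalRing.residue R cR ≠ 0 :=
    (IsLocalRing.residue_ne_zero_iff_isUnit _).mpr hcRu
  -- m divides n
  have hs0 : n % m = 0 := by
    by_contra hs
    have hspos : 0 < n % m := Nat.pos_of_ne_zero hs
    have hslt : n % m < m := Nat.mod_lt _ hm
    have hdec : (evalPair d (fun i => IsLocalRing.residue R (a i))
        (fun i => IsLocalRing.residue R (b i)))^[n] v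
        = (g (n/m)) ^ (d ^ (n % m)) •
          (evalPair d (fun i => IsLocalRing.residue R (a i))
            (fun i => IsLocalRing.residue R (b i)))^[n % m] v := by
      conv_lhs => rw [show n = n % m + (n/m)*m from (Nat.mod_add_div' n m).symm]
      rw [Function.iterate_add_apply, hgv, evalPair_iterate_smul]
    rw [hresn] at hdec
    have hsc : (evalPair d (fun i => IsLocalRing.residue R (a i))
        (fun i => IsLocalRing.residue R (b i)))^[n % m] v
        = (((g (n/m)) ^ (d ^ (n % m)))⁻¹ * IsLocalRing.residue R cR) • v := by
      rw [mul_smul, hdec, inv_smul_smul₀ (pow_ne_zero _ (hgne _))]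
    have hle := hmmin (n % m) hspos ⟨_, mul_ne_zero (inv_ne_zero (pow_ne_zero _ (hgne _))) hrescR, hsc⟩
    omega
  set κ := n / m with hκdef
  have hκm : κ * m = n := Nat.div_mul_cancel (Nat.dvd_of_mod_eq_zero hs0)
  have hκpos : 0 < κ := by
    rcases Nat.eq_zero_or_pos κ with h | h
    · rw [h, zero_mul] at hκm; omega
    · exact h
  -- the product of multipliers
  have hcast : ((d^m : ℕ) : IsLocalRing.ResidueField R) = ((d:ℕ) : IsLocalRing.ResidueField R)^m := by
    push_cast; ring
  have hCClam : (∏ i ∈ Finset.range m, rho d (fun i => IsLocalRing.residue R (a i))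
      (fun i => IsLocalRing.residue R (b i))
      ((evalPair d (fun i => IsLocalRing.residue R (a i))
        (fun i => IsLocalRing.residue R (b i)))^[i] v)) = C^2 * lam := by
    rw [lkey d hd1 _ _ v m hv0 (fun i _ => hvj i) C hmper, hlam, hcast]
    field_simp

  -- conclusion mapper
  have finish : (κ = 1 ∨ (lam ≠ 0 ∧ ∃ r : ℕ, 0 < r ∧ lam ^ r = 1 ∧
      (∀ s : ℕ, 0 < s → lam ^ s = 1 → r ≤ s) ∧
      (κ = r ∨ ∃ e : ℕ, 1 ≤ e ∧ κ = ringChar (IsLocalRing.ResidueField R) ^ e * r))) →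
      (n = m ∨ (lam ≠ 0 ∧ ∃ r : ℕ, 0 < r ∧ lam ^ r = 1 ∧
        (∀ s : ℕ, 0 < s → lam ^ s = 1 → r ≤ s) ∧
        (n = m * r ∨ ∃ e : ℕ, 1 ≤ e ∧
          n = (ringChar (IsLocalRing.ResidueField R)) ^ e * (m * r)))) := by
    rintro (h1 | ⟨hl0, r, hrpos, hr1, hrmin, hcase⟩)
    · left; rw [← hκm, h1, one_mul]
    · right
      refine ⟨hl0, r, hrpos, hr1, hrmin, ?_⟩
      rcases hcase with hk | ⟨e, he, hk⟩
      · left; rw [← hκm, hk]; ring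
      · right; exact ⟨e, he, by rw [← hκm, hk]; ring⟩
  have hP0 : (evalPair d a b)^[0*m] P = P := by rw [Nat.zero_mul]; rfl
  rcases hP with huP | huP
  · -- chart 1
    have hv1 : v.1 ≠ 0 := by
      simpa [hvdef] using (IsLocalRing.residue_ne_zero_iff_isUnit P.1).mpr huP
    have hres1 : ∀ j, IsLocalRing.residue R (((evalPair d a b)^[j*m] P).1) = g j * v.1 := by
      intro j
      have h := hresit (j*m)
      rw [hgv j] at h
      have := congrArg Prod.fst h; simpa [pmap, smul_pair] using this
    have huj : ∀ j, IsUnit (((evalPair d a b)^[j*m] P).1) := fun j =>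
      (IsLocalRing.residue_ne_zero_iff_isUnit _).mp
        (by rw [hres1 j]; exact mul_ne_zero (hgne j) hv1)
    set u : ℕ → Rˣ := fun j => (huj j).unit with hudef
    have hu_spec : ∀ j, (↑(u j) : R) = ((evalPair d a b)^[j*m] P).1 := fun j => (huj j).unit_spec
    set z : ℕ → R := fun j => ((evalPair d a b)^[j*m] P).2 * ↑(u j)⁻¹ with hzdef
    have hzdiff : ∀ i j, (z i - z j) * (↑(u i) * ↑(u j))
        = det2 ((evalPair d a b)^[j*m] P) ((evalPair d a b)^[i*m] P) := by
      intro i j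
      have e1 : (↑(u i)⁻¹ : R) * ↑(u i) = 1 := (u i).inv_mul
      have e2 : (↑(u j)⁻¹ : R) * ↑(u j) = 1 := (u j).inv_mul
      have e3 := hu_spec i
      have e4 := hu_spec j
      show (((evalPair d a b)^[i*m] P).2 * ↑(u i)⁻¹
          - ((evalPair d a b)^[j*m] P).2 * ↑(u j)⁻¹) * (↑(u i) * ↑(u j)) = _
      rw [det2]
      linear_combination (((evalPair d a b)^[i*m] P).2 * (↑(u j) : R)) * e1
        - (((evalPair d a b)^[j*m] P).2 * (↑(u i) : R)) * e2
        - ((evalPair d a b)^[j*m] P).2 * e3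
        + ((evalPair d a b)^[i*m] P).2 * e4
    have hruj : ∀ l, IsLocalRing.residue R ↑(u l) = g l * v.1 := fun l => by
      rw [hu_spec l]; exact hres1 l
    have H1 : ∀ i j : ℕ, ∃ w : R, z (i+1) - z (j+1) = (z i - z j) * w
        ∧ IsLocalRing.residue R w = lam := by
      intro i j
      have hAj : pmap (IsLocalRing.residue R) ((evalPair d a b)^[j*m] P) = g j • v := by
        rw [hresit, hgv]
      have hAi : pmap (IsLocalRing.residue R) ((evalPair d a b)^[i*m] P) = g i • v := by
        rw [hresit, hgv]
      obtain ⟨E, hE, hEres⟩ := block_factor d hd1 a b _ _ v (g j) (g i)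
        (hgne j) (hgne i) hAj hAi m (fun l _ => hvj l)
      have hshift : ∀ l, (evalPair d a b)^[m] ((evalPair d a b)^[l*m] P)
          = (evalPair d a b)^[(l+1)*m] P := by
        intro l; rw [show (l+1)*m = m + l*m from by ring, Function.iterate_add_apply]
      rw [hshift i, hshift j] at hE
      refine ⟨↑(u i) * ↑(u j) * E * ↑((u (i+1)) * (u (j+1)))⁻¹, ?_, ?_⟩
      · have h1 := hzdiff (i+1) (j+1)
        have h2 := hzdiff i j
        have h3 : (z (i+1) - z (j+1)) * (↑(u (i+1)) * ↑(u (j+1)))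
            = (z i - z j) * (↑(u i) * ↑(u j)) * E := by rw [h1, h2, hE]
        have h4 : ((↑(u (i+1)) : R) * ↑(u (j+1))) * (↑((u (i+1)) * (u (j+1)))⁻¹ : R) = 1 := by
          rw [show ((↑(u (i+1)) * ↑(u (j+1))) : R) = ((↑((u (i+1)) * (u (j+1)))) : R) from rfl]
          exact ((u (i+1)) * (u (j+1))).mul_inv
        linear_combination (↑((u (i+1)) * (u (j+1)))⁻¹ : R) * h3 - (z (i+1) - z (j+1)) * h4
      · rw [map_mul, map_mul, map_mul, res_unit_inv, hEres, hCClam, hruj i, hruj j,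
          Units.val_mul, map_mul, hruj (i+1), hruj (j+1), hgs i, hgs j]
        have h5 : (g j * g i)^(d^m - 1) * (g j * g i) = g i ^(d^m) * g j ^(d^m) := by
          rw [← pow_succ, show d^m - 1 + 1 = d^m from by
            have := Nat.one_le_pow m d (by omega); omega, mul_pow]
          ring
        rw [mul_inv_eq_iff_eq_mul₀ (mul_ne_zero
          (mul_ne_zero (mul_ne_zero (pow_ne_zero _ (hgne i)) hC) hv1)
          (mul_ne_zero (mul_ne_zero (pow_ne_zero _ (hgne j)) hC) hv1))]
        linear_combination (v.1^2 * C^2 * lam) * h5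
    have H2 : z κ = z 0 := by
      have h := hzdiff κ 0
      rw [hP0, hκm, hQn, det2_smul_self] at h
      rcases mul_eq_zero.mp h with h' | h'
      · exact sub_eq_zero.mp h'
      · exact absurd h' (mul_ne_zero (u κ).ne_zero (u 0).ne_zero)
    have H3 : ∀ j, 0 < j → j < κ → z j ≠ z 0 := by
      intro j hj hjκ heq
      have h := hzdiff j 0
      rw [heq, sub_self, zero_mul, hP0] at h
      have hcross : P.1 * ((evalPair d a b)^[j*m] P).2
          = P.2 * ((evalPair d a b)^[j*m] P).1 := by
        have h' := h.symm
        rw [det2] at h'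
        linear_combination h'
      obtain ⟨c', hc'0, hc'⟩ := K_scalar1 P _ huP (huj j) hcross
      have hle := hmin (j*m) (by positivity) ⟨c', hc'0, by
        rw [show ((algebraMap R (FractionRing R)) P.1, (algebraMap R (FractionRing R)) P.2)
            = pmap (algebraMap R (FractionRing R)) P from rfl, pmap_evalPair_iterate]
        exact hc'⟩
      have hlt : j*m < n := by
        rw [← hκm]
        exact (Nat.mul_lt_mul_right hm).mpr hjκ
      omega
    exact finish (pezda z lam H1 κ hκpos H2 H3)
  · -- chart 2
    have hv2 : v.2 ≠ 0 := by
      simpa [hvdef] using (IsLocalRing.residue_ne_zero_iff_isUnit P.2).mpr huP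
    have hres2 : ∀ j, IsLocalRing.residue R (((evalPair d a b)^[j*m] P).2) = g j * v.2 := by
      intro j
      have h := hresit (j*m)
      rw [hgv j] at h
      have := congrArg Prod.snd h; simpa [pmap, smul_pair] using this
    have huj : ∀ j, IsUnit (((evalPair d a b)^[j*m] P).2) := fun j =>
      (IsLocalRing.residue_ne_zero_iff_isUnit _).mp
        (by rw [hres2 j]; exact mul_ne_zero (hgne j) hv2)
    set u : ℕ → Rˣ := fun j => (huj j).unit with hudef
    have hu_spec : ∀ j, (↑(u j) : R) = ((evalPair d a b)^[j*m] P).2 := fun j => (huj j).unit_spec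
    set z : ℕ → R := fun j => ((evalPair d a b)^[j*m] P).1 * ↑(u j)⁻¹ with hzdef
    have hzdiff : ∀ i j, (z i - z j) * (↑(u i) * ↑(u j))
        = det2 ((evalPair d a b)^[i*m] P) ((evalPair d a b)^[j*m] P) := by
      intro i j
      have e1 : (↑(u i)⁻¹ : R) * ↑(u i) = 1 := (u i).inv_mul
      have e2 : (↑(u j)⁻¹ : R) * ↑(u j) = 1 := (u j).inv_mul
      have e3 := hu_spec i
      have e4 := hu_spec j
      show (((evalPair d a b)^[i*m] P).1 * ↑(u i)⁻¹
          - ((evalPair d a b)^[j*m] P).1 * ↑(u j)⁻¹) * (↑(u i) * ↑(u j)) = _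
      rw [det2]
      linear_combination (((evalPair d a b)^[i*m] P).1 * (↑(u j) : R)) * e1
        - (((evalPair d a b)^[j*m] P).1 * (↑(u i) : R)) * e2
        - ((evalPair d a b)^[j*m] P).1 * e3
        + ((evalPair d a b)^[i*m] P).1 * e4
    have hruj : ∀ l, IsLocalRing.residue R ↑(u l) = g l * v.2 := fun l => by
      rw [hu_spec l]; exact hres2 l
    have H1 : ∀ i j : ℕ, ∃ w : R, z (i+1) - z (j+1) = (z i - z j) * w
        ∧ IsLocalRing.residue R w = lam := by
      intro i j
      have hAj : pmap (IsLocalRing.residue R) ((evalPair d a b)^[j*m] P) = g j • v := by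
        rw [hresit, hgv]
      have hAi : pmap (IsLocalRing.residue R) ((evalPair d a b)^[i*m] P) = g i • v := by
        rw [hresit, hgv]
      obtain ⟨E, hE, hEres⟩ := block_factor d hd1 a b _ _ v (g i) (g j)
        (hgne i) (hgne j) hAi hAj m (fun l _ => hvj l)
      have hshift : ∀ l, (evalPair d a b)^[m] ((evalPair d a b)^[l*m] P)
          = (evalPair d a b)^[(l+1)*m] P := by
        intro l; rw [show (l+1)*m = m + l*m from by ring, Function.iterate_add_apply]
      rw [hshift i, hshift j] at hE
      refine ⟨↑(u i) * ↑(u j) * E * ↑((u (i+1)) * (u (j+1)))⁻¹, ?_, ?_⟩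
      · have h1 := hzdiff (i+1) (j+1)
        have h2 := hzdiff i j
        have h3 : (z (i+1) - z (j+1)) * (↑(u (i+1)) * ↑(u (j+1)))
            = (z i - z j) * (↑(u i) * ↑(u j)) * E := by rw [h1, h2, hE]
        have h4 : ((↑(u (i+1)) : R) * ↑(u (j+1))) * (↑((u (i+1)) * (u (j+1)))⁻¹ : R) = 1 := by
          rw [show ((↑(u (i+1)) * ↑(u (j+1))) : R) = ((↑((u (i+1)) * (u (j+1)))) : R) from rfl]
          exact ((u (i+1)) * (u (j+1))).mul_inv
        linear_combination (↑((u (i+1)) * (u (j+1)))⁻¹ : R) * h3 - (z (i+1) - z (j+1)) * h4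
      · rw [map_mul, map_mul, map_mul, res_unit_inv, hEres, hCClam, hruj i, hruj j,
          Units.val_mul, map_mul, hruj (i+1), hruj (j+1), hgs i, hgs j]
        have h5 : (g i * g j)^(d^m - 1) * (g i * g j) = g i ^(d^m) * g j ^(d^m) := by
          rw [← pow_succ, show d^m - 1 + 1 = d^m from by
            have := Nat.one_le_pow m d (by omega); omega, mul_pow]
        rw [mul_inv_eq_iff_eq_mul₀ (mul_ne_zero
          (mul_ne_zero (mul_ne_zero (pow_ne_zero _ (hgne i)) hC) hv2)
          (mul_ne_zero (mul_ne_zero (pow_ne_zero _ (hgne j)) hC) hv2))]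
        linear_combination (v.2^2 * C^2 * lam) * h5
    have H2 : z κ = z 0 := by
      have h := hzdiff κ 0
      rw [hP0, hκm, hQn, det2_smul_self'] at h
      rcases mul_eq_zero.mp h with h' | h'
      · exact sub_eq_zero.mp h'
      · exact absurd h' (mul_ne_zero (u κ).ne_zero (u 0).ne_zero)
    have H3 : ∀ j, 0 < j → j < κ → z j ≠ z 0 := by
      intro j hj hjκ heq
      have h := hzdiff j 0
      rw [heq, sub_self, zero_mul, hP0] at h
      have hcross : P.2 * ((evalPair d a b)^[j*m] P).1
          = P.1 * ((evalPair d a b)^[j*m] P).2 := by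
        have h' := h.symm
        rw [det2] at h'
        linear_combination h'
      obtain ⟨c', hc'0, hc'⟩ := K_scalar2 P _ huP (huj j) hcross
      have hle := hmin (j*m) (by positivity) ⟨c', hc'0, by
        rw [show ((algebraMap R (FractionRing R)) P.1, (algebraMap R (FractionRing R)) P.2)
            = pmap (algebraMap R (FractionRing R)) P from rfl, pmap_evalPair_iterate]
        exact hc'⟩
      have hlt : j*m < n := by
        rw [← hκm]
        exact (Nat.mul_lt_mul_right hm).mpr hjκ
      omega
    exact finish (pezda z lam H1 κ hκpos H2 H3)
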